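/- Let D be a finite-dimensional central division algebra over a field, and n ≥ 3. Then the elementary subgroup E_n(D) equals the commutator subgroup of GL_n(D). -/

import Mathlib

open Matrix
open scoped commutatorElement

/-- The set of elementary matrices (as units of the matrix ring). -/
def elemSet (D : Type*) [Ring D] (n : ℕ) : Set ((Matrix (Fin n) (Fin n) D)ˣ) :=
  {u | ∃ i j : Fin n, i ≠ j ∧ ∃ a : D,
    u.val = 1 + Matrix.single i j a}

namespace ElemAux

variable {D : Type*} [DivisionRing D] {n : ℕ}

lemma sbMul0 {i j k l : Fin n} (h : j ≠ k) (c d : D) :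
    Matrix.single i j c * Matrix.single k l d = (0 : Matrix (Fin n) (Fin n) D) :=
  Matrix.single_mul_single_of_ne _ _ _ _ h _

lemma sbNeg (i j : Fin n) (x : D) : Matrix.single i j (-x) = -Matrix.single i j x := by
  ext p q; by_cases h : i = p ∧ j = q <;> simp [Matrix.single, h]

/-- elementary matrix as a unit -/
def elemUnit (i j : Fin n) (hij : i ≠ j) (a : D) : (Matrix (Fin n) (Fin n) D)ˣ where
  val := 1 + Matrix.single i j a
  inv := 1 - Matrix.single i j a
  val_inv := by
    have h : Matrix.single i j a * Matrix.single i j a = 0 := sbMul0 hij.symm _ _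
    rw [mul_sub, add_mul, add_mul, one_mul, mul_one, h]; simp
  inv_val := by
    have h : Matrix.single i j a * Matrix.single i j a = 0 := sbMul0 hij.symm _ _
    rw [sub_mul, mul_add, mul_add, one_mul, mul_one, h]; simp

lemma elemUnit_mem (i j : Fin n) (hij : i ≠ j) (a : D) :
    elemUnit i j hij a ∈ Subgroup.closure (elemSet D n) :=
  Subgroup.subset_closure ⟨i, j, hij, a, rfl⟩

lemma elemUnit_val (i j : Fin n) (hij : i ≠ j) (a : D) :
    (elemUnit i j hij a).val = 1 + Matrix.single i j a := rfl

def diagUnit (d : Fin n → Dˣ) : (Matrix (Fin n) (Fin n) D)ˣ where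
  val := diagonal (fun i => (d i : D))
  inv := diagonal (fun i => ((d i)⁻¹ : Dˣ))
  val_inv := by rw [diagonal_mul_diagonal]; simp
  inv_val := by rw [diagonal_mul_diagonal]; simp

lemma diagUnit_mul (d e : Fin n → Dˣ) :
    diagUnit d * diagUnit e = diagUnit (fun i => d i * e i) := by
  ext : 1
  show (diagUnit d).val * (diagUnit e).val = _
  simp [diagUnit, diagonal_mul_diagonal]

lemma diagUnit_inv (d : Fin n → Dˣ) :
    (diagUnit d)⁻¹ = diagUnit (fun i => (d i)⁻¹) := rfl

lemma diag_mul_sb (d : Fin n → D) (i j : Fin n) (a : D) :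
    diagonal d * Matrix.single i j a = Matrix.single i j (d i * a) := by
  ext p q
  simp only [Matrix.diagonal_mul, Matrix.single, Matrix.of_apply, mul_ite, mul_zero]
  split <;> simp_all

lemma sb_mul_diag (d : Fin n → D) (i j : Fin n) (a : D) :
    Matrix.single i j a * diagonal d = Matrix.single i j (a * d j) := by
  ext p q
  simp only [Matrix.mul_diagonal, Matrix.single, Matrix.of_apply, ite_mul, zero_mul]
  split <;> simp_all

lemma diag_conj_elem (d : Fin n → Dˣ) (i j : Fin n) (hij : i ≠ j) (a : D) :
    diagUnit d * elemUnit i j hij a * (diagUnit d)⁻¹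
      = elemUnit i j hij ((d i : D) * a * ((d j)⁻¹ : Dˣ)) := by
  ext : 1
  show (diagUnit d).val * (elemUnit i j hij a).val * ((diagUnit d)⁻¹).val = _
  rw [diagUnit_inv]
  show diagonal _ * (1 + Matrix.single i j a) * diagonal _ = 1 + Matrix.single i j _
  rw [mul_add, mul_one, add_mul, diag_mul_sb, sb_mul_diag, diagonal_mul_diagonal]
  simp [mul_assoc]

lemma wVal (i j : Fin n) (hij : i ≠ j) (x y : D) (hxy : x * y = 1) (hyx : y * x = 1) :
    ((1 + Matrix.single i j x) * (1 + Matrix.single j i (-y)) * (1 + Matrix.single i j x)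
      : Matrix (Fin n) (Fin n) D)
    = 1 + Matrix.single i j x + Matrix.single j i (-y)
        + Matrix.single i i (-1) + Matrix.single j j (-1) := by
  simp only [mul_add, add_mul, mul_one, one_mul,
    Matrix.single_mul_single_same, sbMul0 hij, sbMul0 hij.symm, mul_neg, neg_mul, hxy, hyx,
    neg_neg, sbNeg, zero_mul, mul_zero, add_zero, zero_add]
  abel

lemma diagPairVal (i j : Fin n) (hij : i ≠ j) (x y : D) :
    ((1 + Matrix.single i j x + Matrix.single j i (-y)
        + Matrix.single i i (-1) + Matrix.single j j (-1)) *
     (1 + Matrix.single i j (-1) + Matrix.single j i (-(-1:D))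
        + Matrix.single i i (-1) + Matrix.single j j (-1))
      : Matrix (Fin n) (Fin n) D)
    = 1 + Matrix.single i i (x - 1) + Matrix.single j j (y - 1) := by
  simp only [mul_add, add_mul, mul_one, one_mul,
    Matrix.single_mul_single_same, sbMul0 hij, sbMul0 hij.symm, mul_neg, neg_mul,
    neg_neg, sbNeg, zero_mul, mul_zero, add_zero, zero_add, sub_eq_add_neg,
    Matrix.single_add, neg_zero, neg_add]
  abel

lemma exists_ne_pair (hn : 3 ≤ n) (i j : Fin n) : ∃ k : Fin n, k ≠ i ∧ k ≠ j := by
  by_contra h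
  push_neg at h
  have hsub : (Finset.univ : Finset (Fin n)) ⊆ {i, j} := by
    intro k _
    rcases eq_or_ne k i with rfl|hki
    · simp
    · simp [h k hki]
  have h1 := Finset.card_le_card hsub
  simp [Finset.card_univ] at h1
  have h2 : ({i, j} : Finset (Fin n)).card ≤ 2 := by
    apply le_trans (Finset.card_insert_le _ _); simp
  omega

lemma pair_mem (i j : Fin n) (hij : i ≠ j) (x : Dˣ) :
    diagUnit (fun k => if k = i then x else if k = j then x⁻¹ else 1)
      ∈ Subgroup.closure (elemSet D n) := by
  have key : (diagUnit (fun k => if k = i then x else if k = j then x⁻¹ else 1)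
      : (Matrix (Fin n) (Fin n) D)ˣ)
      = (elemUnit i j hij (x:D) * elemUnit j i hij.symm (-((x⁻¹:Dˣ):D)) *
          elemUnit i j hij (x:D)) *
        (elemUnit i j hij (-1:D) * elemUnit j i hij.symm (-(-1:D)) * elemUnit i j hij (-1:D)) := by
    ext : 1
    show diagonal _ = (_ * _ * _) * (_ * _ * _)
    simp only [Units.val_mul, elemUnit_val]
    rw [wVal i j hij (x:D) ((x⁻¹:Dˣ):D) (by simp) (by simp),
        wVal i j hij (-1:D) (-1:D) (by simp) (by simp), diagPairVal i j hij]
    have hij' : j ≠ i := Ne.symm hij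
    ext p q
    by_cases hpq : p = q <;> by_cases hpi : p = i <;> by_cases hqj : q = j <;>
      by_cases hpj : p = j <;>
      simp_all [Matrix.single, Matrix.one_apply, Matrix.diagonal_apply, eq_comm]
  rw [key]
  exact mul_mem (mul_mem (mul_mem (elemUnit_mem _ _ _ _) (elemUnit_mem _ _ _ _))
      (elemUnit_mem _ _ _ _))
    (mul_mem (mul_mem (elemUnit_mem _ _ _ _) (elemUnit_mem _ _ _ _)) (elemUnit_mem _ _ _ _))

lemma singleComm_mem (hn : 3 ≤ n) (i : Fin n) (a b : Dˣ) :
    diagUnit (fun k => if k = i then a * b * a⁻¹ * b⁻¹ else 1)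
      ∈ Subgroup.closure (elemSet D n) := by
  obtain ⟨j, hji, -⟩ := exists_ne_pair hn i i
  have hij : i ≠ j := hji.symm
  have key : (diagUnit (fun k => if k = i then a * b * a⁻¹ * b⁻¹ else 1)
      : (Matrix (Fin n) (Fin n) D)ˣ)
      = diagUnit (fun k => if k = i then a * b else if k = j then (a*b)⁻¹ else 1) *
        (diagUnit (fun k => if k = i then a else if k = j then a⁻¹ else 1))⁻¹ *
        (diagUnit (fun k => if k = i then b else if k = j then b⁻¹ else 1))⁻¹ := by
    rw [diagUnit_inv, diagUnit_inv, diagUnit_mul, diagUnit_mul]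
    congr 1
    funext k
    by_cases hki : k = i
    · subst hki; simp [hij, _root_.mul_inv_rev, mul_assoc]
    · by_cases hkj : k = j
      · subst hkj; simp [hki, _root_.mul_inv_rev]
      · simp [hki, hkj]
  rw [key]
  exact mul_mem (mul_mem (pair_mem i j hij _) (inv_mem (pair_mem i j hij _)))
    (inv_mem (pair_mem i j hij _))

lemma diagUnit_one : (diagUnit (fun _ : Fin n => (1:Dˣ)) : (Matrix (Fin n) (Fin n) D)ˣ) = 1 := by
  ext : 1
  show diagonal _ = 1
  simp

lemma diagComm_mem (hn : 3 ≤ n) (c : Fin n → Dˣ)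
    (hc : ∀ i, ∃ a b : Dˣ, c i = a * b * a⁻¹ * b⁻¹) :
    diagUnit c ∈ Subgroup.closure (elemSet D n) := by
  have main : ∀ s : Finset (Fin n),
      diagUnit (fun k => if k ∈ s then c k else 1) ∈ Subgroup.closure (elemSet D n) := by
    intro s
    induction s using Finset.induction_on with
    | empty => simpa using (diagUnit_one (D := D) (n := n)) ▸ one_mem _
    | @insert a s ha ih =>
        have key : (diagUnit (fun k => if k ∈ insert a s then c k else 1)
            : (Matrix (Fin n) (Fin n) D)ˣ)
            = diagUnit (fun k => if k = a then c a else 1) *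
              diagUnit (fun k => if k ∈ s then c k else 1) := by
          rw [diagUnit_mul]
          congr 1
          funext k
          by_cases hk : k = a
          · subst hk; simp [ha]
          · simp [hk, Finset.mem_insert]
        rw [key]
        obtain ⟨x, y, hxy⟩ := hc a
        refine mul_mem ?_ ih
        have := singleComm_mem hn a x y
        simpa [← hxy] using this
  have := main Finset.univ
  simpa using this

lemma closure_le_commutator (hn : 3 ≤ n) :
    Subgroup.closure (elemSet D n) ≤ commutator (Matrix (Fin n) (Fin n) D)ˣ := by
  rw [Subgroup.closure_le]
  rintro u ⟨i, j, hij, a, hu⟩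
  obtain ⟨k, hki, hkj⟩ := exists_ne_pair hn i j
  have hik : i ≠ k := hki.symm
  have key : u = ⁅elemUnit i k hik a, elemUnit k j hkj (1:D)⁆ := by
    ext : 1
    rw [hu]
    show _ = (elemUnit i k hik a).val * (elemUnit k j hkj 1).val *
      (elemUnit i k hik a)⁻¹.val * (elemUnit k j hkj 1)⁻¹.val
    show (1 + Matrix.single i j a : Matrix (Fin n) (Fin n) D)
      = (1 + Matrix.single i k a) * (1 + Matrix.single k j (1:D)) *
        (1 - Matrix.single i k a) * (1 - Matrix.single k j (1:D))
    have h1 : Matrix.single i k a * Matrix.single k j (1:D) = Matrix.single i j a := by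
      rw [Matrix.single_mul_single_same, mul_one]
    simp only [mul_add, add_mul, mul_sub, sub_mul, mul_one, one_mul, zero_mul, mul_zero,
      h1, sbMul0 (Ne.symm hij), sbMul0 (Ne.symm hik), sbMul0 (Ne.symm hkj)]
    abel
  rw [key]
  exact Subgroup.commutator_mem_commutator (Subgroup.mem_top _) (Subgroup.mem_top _)

/-! ### Gaussian elimination -/

def Red (k : ℕ) (A : Matrix (Fin n) (Fin n) D) : Prop :=
  ∀ i j : Fin n, i ≠ j → (i.val < k ∨ j.val < k) → A i j = 0

lemma colUnit_ex (kF : Fin n) (c : Fin n → D) (s : Finset (Fin n)) (hs : kF ∉ s) :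
    ∃ u ∈ Subgroup.closure (elemSet D n),
      u.val = 1 + ∑ i ∈ s, Matrix.single i kF (c i) := by
  induction s using Finset.induction_on with
  | empty => exact ⟨1, one_mem _, by simp⟩
  | @insert a s ha ih =>
      have hs' : kF ∉ s := fun h => hs (Finset.mem_insert_of_mem h)
      have hak : a ≠ kF := fun h => hs (h ▸ Finset.mem_insert_self a s)
      obtain ⟨u, hu, huval⟩ := ih hs'
      refine ⟨elemUnit a kF hak (c a) * u, mul_mem (elemUnit_mem _ _ _ _) hu, ?_⟩
      rw [Units.val_mul, huval, elemUnit_val, Finset.sum_insert ha]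
      have hES : Matrix.single a kF (c a) * ∑ i ∈ s, Matrix.single i kF (c i) = 0 := by
        rw [Finset.mul_sum]
        exact Finset.sum_eq_zero fun i hi => sbMul0 (by rintro rfl; exact hs' hi) _ _
      rw [add_mul, one_mul, mul_add, mul_one, hES, add_zero]
      abel

lemma rowUnit_ex (kF : Fin n) (c : Fin n → D) (s : Finset (Fin n)) (hs : kF ∉ s) :
    ∃ u ∈ Subgroup.closure (elemSet D n),
      u.val = 1 + ∑ j ∈ s, Matrix.single kF j (c j) := by
  induction s using Finset.induction_on with
  | empty => exact ⟨1, one_mem _, by simp⟩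
  | @insert a s ha ih =>
      have hs' : kF ∉ s := fun h => hs (Finset.mem_insert_of_mem h)
      have hak : a ≠ kF := fun h => hs (h ▸ Finset.mem_insert_self a s)
      obtain ⟨u, hu, huval⟩ := ih hs'
      refine ⟨u * elemUnit kF a hak.symm (c a), mul_mem hu (elemUnit_mem _ _ _ _), ?_⟩
      rw [Units.val_mul, huval, elemUnit_val, Finset.sum_insert ha]
      have hSE : (∑ j ∈ s, Matrix.single kF j (c j)) * Matrix.single kF a (c a) = 0 := by
        rw [Finset.sum_mul]
        exact Finset.sum_eq_zero fun i hi => sbMul0 (by rintro rfl; exact hs' hi) _ _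
      rw [mul_add, mul_one, add_mul, one_mul, hSE, add_zero]
      abel

lemma colSum_mul_apply (kF : Fin n) (c : Fin n → D) (s : Finset (Fin n))
    (M : Matrix (Fin n) (Fin n) D) (a b : Fin n) :
    ((∑ i ∈ s, Matrix.single i kF (c i)) * M) a b
      = if a ∈ s then c a * M kF b else 0 := by
  rw [Finset.sum_mul, Matrix.sum_apply]
  have h : ∀ i ∈ s, (Matrix.single i kF (c i) * M) a b
      = if i = a then c i * M kF b else 0 := by
    intro i _
    by_cases h : i = a
    · subst h; simp
    · rw [if_neg h, Matrix.single_mul_apply_of_ne _ _ _ _ _ (Ne.symm h)]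
  rw [Finset.sum_congr rfl h, Finset.sum_ite_eq' s a (fun i => c i * M kF b)]

lemma mul_rowSum_apply (kF : Fin n) (c : Fin n → D) (s : Finset (Fin n))
    (M : Matrix (Fin n) (Fin n) D) (a b : Fin n) :
    (M * ∑ j ∈ s, Matrix.single kF j (c j)) a b
      = if b ∈ s then M a kF * c b else 0 := by
  rw [Finset.mul_sum, Matrix.sum_apply]
  have h : ∀ j ∈ s, (M * Matrix.single kF j (c j)) a b
      = if j = b then M a kF * c j else 0 := by
    intro j _
    by_cases h : j = b
    · subst h; simp
    · rw [if_neg h, Matrix.mul_single_apply_of_ne _ _ _ _ _ (Ne.symm h)]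
  rw [Finset.sum_congr rfl h, Finset.sum_ite_eq' s b (fun j => M a kF * c j)]

lemma stepPivot (k : ℕ) (hk : k < n) (M : (Matrix (Fin n) (Fin n) D)ˣ)
    (hM : Red k M.val) :
    ∃ u ∈ Subgroup.closure (elemSet D n), Red k (u * M).val ∧
      (u * M).val ⟨k, hk⟩ ⟨k, hk⟩ ≠ 0 := by
  set kF : Fin n := ⟨k, hk⟩ with hkF
  by_cases hp : M.val kF kF = 0
  · have hex : ∃ i, M.val i kF ≠ 0 := by
      by_contra hall
      push_neg at hall
      have h1 : M.val *ᵥ (Pi.single kF (1 : D)) = 0 := by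
        rw [Matrix.mulVec_single]
        ext a
        show M.val a kF * 1 = _
        rw [mul_one, hall a]
        rfl
      have h3 : (M.inv * M.val) *ᵥ (Pi.single kF (1 : D)) = 0 := by
        rw [← Matrix.mulVec_mulVec, h1, Matrix.mulVec_zero]
      rw [M.inv_val, Matrix.one_mulVec] at h3
      have h4 := congrFun h3 kF
      rw [Pi.single_eq_same] at h4
      exact one_ne_zero h4
    obtain ⟨i, hi⟩ := hex
    have hik : i ≠ kF := by rintro rfl; exact hi hp
    have hige : ¬ i.val < k := fun hlt => hi (hM i kF hik (Or.inl hlt))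
    have hval : ∀ a b, ((elemUnit kF i (Ne.symm hik) 1 * M).val) a b
        = M.val a b + if a = kF then M.val i b else 0 := by
      intro a b
      rw [Units.val_mul, elemUnit_val, add_mul, one_mul, Matrix.add_apply]
      congr 1
      by_cases h : a = kF
      · subst h; simp
      · rw [if_neg h, Matrix.single_mul_apply_of_ne _ _ _ _ _ h]
    refine ⟨elemUnit kF i (Ne.symm hik) 1, elemUnit_mem _ _ _ _, ?_, ?_⟩
    · intro a b hab hlt
      rw [hval]
      by_cases h : a = kF
      · subst h
        have hbk : b.val < k := by
          rcases hlt with h1 | h2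
          · exact absurd h1 (by simp [hkF])
          · exact h2
        have hib : i ≠ b := by rintro rfl; exact hige hbk
        rw [hM _ _ hab hlt, if_pos rfl, hM i b hib (Or.inr hbk), add_zero]
      · rw [hM _ _ hab hlt, if_neg h, add_zero]
    · rw [hval, hp, if_pos rfl, zero_add]
      exact hi
  · exact ⟨1, one_mem _, by rw [one_mul]; exact hM, by rw [one_mul]; exact hp⟩

lemma stepCol (k : ℕ) (hk : k < n) (M : (Matrix (Fin n) (Fin n) D)ˣ)
    (hM : Red k M.val) (hp : M.val ⟨k, hk⟩ ⟨k, hk⟩ ≠ 0) :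
    ∃ u ∈ Subgroup.closure (elemSet D n), Red k (u * M).val ∧
      (∀ a, a ≠ ⟨k, hk⟩ → (u * M).val a ⟨k, hk⟩ = 0) ∧
      (∀ b, (u * M).val ⟨k, hk⟩ b = M.val ⟨k, hk⟩ b) := by
  set kF : Fin n := ⟨k, hk⟩ with hkF
  set c : Fin n → D := fun a => -(M.val a kF) * (M.val kF kF)⁻¹ with hc
  obtain ⟨u, huE, huval⟩ := colUnit_ex kF c (Finset.univ.erase kF) (Finset.notMem_erase _ _)
  have hval : ∀ a b, (u * M).val a b
      = M.val a b + if a ∈ Finset.univ.erase kF then c a * M.val kF b else 0 := by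
    intro a b
    rw [Units.val_mul, huval, add_mul, one_mul, Matrix.add_apply, colSum_mul_apply]
  refine ⟨u, huE, ?_, ?_, ?_⟩
  · intro a b hab hlt
    rw [hval, hM _ _ hab hlt, zero_add]
    by_cases h : a ∈ Finset.univ.erase kF
    · rw [if_pos h]
      rcases hlt with h1 | h2
      · have ha : a ≠ kF := (Finset.mem_erase.mp h).1
        rw [hc]
        simp [hM a kF ha (Or.inl h1)]
      · have hbk : b ≠ kF := by rintro rfl; exact absurd h2 (by simp [hkF])
        rw [hM kF b (Ne.symm hbk) (Or.inr h2), mul_zero]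
    · rw [if_neg h]
  · intro a ha
    rw [hval, if_pos (Finset.mem_erase.mpr ⟨ha, Finset.mem_univ _⟩), hc]
    simp [mul_assoc, inv_mul_cancel₀ hp]
  · intro b
    rw [hval, if_neg (by simp)]
    rw [add_zero]

lemma stepRow (k : ℕ) (hk : k < n) (M : (Matrix (Fin n) (Fin n) D)ˣ)
    (hM : Red k M.val) (hcol : ∀ a, a ≠ ⟨k, hk⟩ → M.val a ⟨k, hk⟩ = 0)
    (hp : M.val ⟨k, hk⟩ ⟨k, hk⟩ ≠ 0) :
    ∃ w ∈ Subgroup.closure (elemSet D n), Red k (M * w).val ∧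
      (∀ a, a ≠ ⟨k, hk⟩ → (M * w).val a ⟨k, hk⟩ = 0) ∧
      (∀ b, b ≠ ⟨k, hk⟩ → (M * w).val ⟨k, hk⟩ b = 0) := by
  set kF : Fin n := ⟨k, hk⟩ with hkF
  set c : Fin n → D := fun b => -((M.val kF kF)⁻¹ * M.val kF b) with hc
  obtain ⟨w, hwE, hwval⟩ := rowUnit_ex kF c (Finset.univ.erase kF) (Finset.notMem_erase _ _)
  have hval : ∀ a b, (M * w).val a b
      = M.val a b + if b ∈ Finset.univ.erase kF then M.val a kF * c b else 0 := by
    intro a b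
    rw [Units.val_mul, hwval, mul_add, mul_one, Matrix.add_apply, mul_rowSum_apply]
  refine ⟨w, hwE, ?_, ?_, ?_⟩
  · intro a b hab hlt
    rw [hval, hM _ _ hab hlt, zero_add]
    by_cases h : b ∈ Finset.univ.erase kF
    · rw [if_pos h]
      by_cases ha : a = kF
      · subst ha
        have hbk : b.val < k := by
          rcases hlt with h1 | h2
          · exact absurd h1 (by simp [hkF])
          · exact h2
        have hbk' : b ≠ kF := (Finset.mem_erase.mp h).1
        rw [hc]
        simp [hM kF b (Ne.symm hbk') (Or.inr hbk)]
      · rw [hcol a ha, zero_mul]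
    · rw [if_neg h]
  · intro a ha
    rw [hval, if_neg (by simp), add_zero]
    exact hcol a ha
  · intro b hb
    rw [hval, if_pos (Finset.mem_erase.mpr ⟨hb, Finset.mem_univ _⟩), hc]
    simp [← mul_assoc, mul_inv_cancel₀ hp]

lemma stepFull (k : ℕ) (hk : k < n) (M : (Matrix (Fin n) (Fin n) D)ˣ)
    (hM : Red k M.val) :
    ∃ e1 ∈ Subgroup.closure (elemSet D n), ∃ e2 ∈ Subgroup.closure (elemSet D n),
      Red (k + 1) (e1 * M * e2).val := by
  obtain ⟨u, huE, hu1, hu2⟩ := stepPivot k hk M hM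
  obtain ⟨v, hvE, hv1, hv2, hv3⟩ := stepCol k hk (u * M) hu1 hu2
  have hp3 : (v * (u * M)).val ⟨k, hk⟩ ⟨k, hk⟩ ≠ 0 := by rw [hv3]; exact hu2
  obtain ⟨w, hwE, hw1, hw2, hw3⟩ := stepRow k hk (v * (u * M)) hv1 hv2 hp3
  refine ⟨v * u, mul_mem hvE huE, w, hwE, ?_⟩
  have hrw : v * u * M * w = v * (u * M) * w := by rw [mul_assoc v u M]
  rw [hrw]
  intro a b hab hlt
  by_cases h : a.val < k ∨ b.val < k
  · exact hw1 a b hab h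
  · push_neg at h
    rcases hlt with h1 | h2
    · have hav : a.val = k := by omega
      have ha : a = ⟨k, hk⟩ := Fin.ext hav
      subst ha
      exact hw3 b (Ne.symm hab)
    · have hbv : b.val = k := by omega
      have hb : b = ⟨k, hk⟩ := Fin.ext hbv
      subst hb
      exact hw2 a hab

lemma reduce : ∀ m k : ℕ, n ≤ k + m → ∀ M : (Matrix (Fin n) (Fin n) D)ˣ,
    Red k M.val →
    ∃ e1 ∈ Subgroup.closure (elemSet D n), ∃ e2 ∈ Subgroup.closure (elemSet D n),
      Red n (e1 * M * e2).val := by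
  intro m
  induction m with
  | zero =>
      intro k hkn M hM
      refine ⟨1, one_mem _, 1, one_mem _, ?_⟩
      rw [one_mul, mul_one]
      intro a b hab hlt
      exact hM a b hab (by omega)
  | succ m ih =>
      intro k hkn M hM
      by_cases hkn' : n ≤ k
      · refine ⟨1, one_mem _, 1, one_mem _, ?_⟩
        rw [one_mul, mul_one]
        intro a b hab hlt
        exact hM a b hab (by omega)
      · push_neg at hkn'
        obtain ⟨e1, he1, e2, he2, hred⟩ := stepFull k hkn' M hM
        obtain ⟨f1, hf1, f2, hf2, hred2⟩ := ih (k + 1) (by omega) (e1 * M * e2) hred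
        refine ⟨f1 * e1, mul_mem hf1 he1, e2 * f2, mul_mem he2 hf2, ?_⟩
        have : f1 * e1 * M * (e2 * f2) = f1 * (e1 * M * e2) * f2 := by group
        rw [this]
        exact hred2

lemma diagRed (M : (Matrix (Fin n) (Fin n) D)ˣ) (h : Red n M.val) :
    ∃ d : Fin n → Dˣ, M = diagUnit d := by
  have hdiag : M.val = diagonal (fun i => M.val i i) := by
    ext a b
    by_cases hab : a = b
    · subst hab; rw [Matrix.diagonal_apply_eq]
    · rw [Matrix.diagonal_apply_ne _ hab]; exact h a b hab (Or.inl a.2)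
  have hvi : ∀ i, M.val i i * M.inv i i = 1 := by
    intro i
    have h1 : diagonal (fun i => M.val i i) * M.inv = 1 := by rw [← hdiag]; exact M.val_inv
    have h2 := congrFun (congrFun h1 i) i
    rwa [Matrix.diagonal_mul, Matrix.one_apply_eq] at h2
  have hiv : ∀ i, M.inv i i * M.val i i = 1 := by
    intro i
    have h1 : M.inv * diagonal (fun i => M.val i i) = 1 := by rw [← hdiag]; exact M.inv_val
    have h2 := congrFun (congrFun h1 i) i
    rwa [Matrix.mul_diagonal, Matrix.one_apply_eq] at h2
  exact ⟨fun i => ⟨M.val i i, M.inv i i, hvi i, hiv i⟩, Units.ext hdiag⟩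

lemma decomp (M : (Matrix (Fin n) (Fin n) D)ˣ) :
    ∃ e1 ∈ Subgroup.closure (elemSet D n), ∃ d : Fin n → Dˣ,
      ∃ e2 ∈ Subgroup.closure (elemSet D n), M = e1 * diagUnit d * e2 := by
  have h0 : Red 0 M.val := by
    intro i j hij hlt
    have : False := by rcases hlt with h | h <;> omega
    exact this.elim
  obtain ⟨e1, he1, e2, he2, hred⟩ := reduce n 0 (by omega) M h0
  obtain ⟨d, hd⟩ := diagRed _ hred
  refine ⟨e1⁻¹, inv_mem he1, d, e2⁻¹, inv_mem he2, ?_⟩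
  rw [← hd]
  group

lemma conj_mem_closure (u : (Matrix (Fin n) (Fin n) D)ˣ)
    (hu : u ∈ Subgroup.closure (elemSet D n)) (g : (Matrix (Fin n) (Fin n) D)ˣ) :
    g * u * g⁻¹ ∈ Subgroup.closure (elemSet D n) := by
  obtain ⟨e1, he1, d, e2, he2, rfl⟩ := decomp g
  have hconj : ∀ v ∈ Subgroup.closure (elemSet D n),
      diagUnit d * v * (diagUnit d)⁻¹ ∈ Subgroup.closure (elemSet D n) := by
    intro v hv
    induction hv using Subgroup.closure_induction with
    | mem x hx =>
        obtain ⟨i, j, hij, a, hval⟩ := hx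
        have hx' : x = elemUnit i j hij a := Units.ext hval
        rw [hx', diag_conj_elem]
        exact elemUnit_mem _ _ _ _
    | one => simpa using one_mem _
    | mul x y hx hy ihx ihy =>
        have hh : diagUnit d * (x * y) * (diagUnit d)⁻¹
            = (diagUnit d * x * (diagUnit d)⁻¹) * (diagUnit d * y * (diagUnit d)⁻¹) := by
          group
        rw [hh]; exact mul_mem ihx ihy
    | inv x hx ihx =>
        have hh : diagUnit d * x⁻¹ * (diagUnit d)⁻¹
            = (diagUnit d * x * (diagUnit d)⁻¹)⁻¹ := by group
        rw [hh]; exact inv_mem ihx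
  have key : (e1 * diagUnit d * e2) * u * (e1 * diagUnit d * e2)⁻¹
      = e1 * (diagUnit d * (e2 * u * e2⁻¹) * (diagUnit d)⁻¹) * e1⁻¹ := by group
  rw [key]
  exact mul_mem (mul_mem he1 (hconj _ (mul_mem (mul_mem he2 hu) (inv_mem he2)))) (inv_mem he1)

lemma commutator_le_closure (hn : 3 ≤ n) :
    commutator ((Matrix (Fin n) (Fin n) D)ˣ) ≤ Subgroup.closure (elemSet D n) := by
  haveI hN : (Subgroup.closure (elemSet D n)).Normal :=
    ⟨fun u hu g => conj_mem_closure u hu g⟩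
  rw [commutator_def, Subgroup.commutator_le]
  intro g _ h _
  apply (QuotientGroup.eq_one_iff _).mp
  obtain ⟨a1, ha1, dg, a2, ha2, rfl⟩ := decomp g
  obtain ⟨b1, hb1, dh, b2, hb2, rfl⟩ := decomp h
  set π : (Matrix (Fin n) (Fin n) D)ˣ →* _ := QuotientGroup.mk' (Subgroup.closure (elemSet D n))
  show π _ = 1
  rw [map_commutatorElement]
  have h1 : π (a1 * diagUnit dg * a2) = π (diagUnit dg) := by
    rw [_root_.map_mul, _root_.map_mul, show π a1 = 1 from (QuotientGroup.eq_one_iff a1).mpr ha1,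
      show π a2 = 1 from (QuotientGroup.eq_one_iff a2).mpr ha2, one_mul, mul_one]
  have h2 : π (b1 * diagUnit dh * b2) = π (diagUnit dh) := by
    rw [_root_.map_mul, _root_.map_mul, show π b1 = 1 from (QuotientGroup.eq_one_iff b1).mpr hb1,
      show π b2 = 1 from (QuotientGroup.eq_one_iff b2).mpr hb2, one_mul, mul_one]
  rw [h1, h2, ← map_commutatorElement]
  have hcm : ⁅diagUnit dg, diagUnit dh⁆
      = diagUnit (fun i => dg i * dh i * (dg i)⁻¹ * (dh i)⁻¹) := by
    rw [commutatorElement_def, diagUnit_inv, diagUnit_inv, diagUnit_mul, diagUnit_mul,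
      diagUnit_mul]
  rw [hcm]
  exact (QuotientGroup.eq_one_iff _).mpr (diagComm_mem hn _ fun i => ⟨dg i, dh i, rfl⟩)

end ElemAux

/-- let `D` be a finite-dimensional central division algebra over a field `K`
and `n ≥ 3`.  Then the elementary subgroup `E_n(D)` equals the commutator subgroup of
`GL_n(D)`. -/
theorem elementary_eq_commutator_GLn
    (K : Type*) [Field K] (D : Type*) [DivisionRing D] [Algebra K D]
    [FiniteDimensional K D] (hcentral : Subalgebra.center K D = ⊥)
    (n : ℕ) (hn : 3 ≤ n) :
    Subgroup.closure (elemSet D n) = commutator ((Matrix (Fin n) (Fin n) D)ˣ) := by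
  exact le_antisymm (ElemAux.closure_le_commutator hn) (ElemAux.commutator_le_closure hn)
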